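/- The map sending a complementary choice function f to its set St(f) of open sets is a bijection between complementary choice functions on X and pre-topologies on X (collections of subsets closed under arbitrary unions). -/
import Mathlib

/-- For a complementary choice function, `f (f A) = f A`. -/
lemma idem_aux {X : Type*} (f : Set X → Set X)
    (hf : (∀ A : Set X, f A ⊆ A) ∧ (∀ A B : Set X, A ⊆ B → f A ⊆ f B) ∧
      (∀ A B : Set X, f A ⊆ B → B ⊆ A → f B = f A)) (A : Set X) :
    f (f A) = f A :=
  hf.2.2 A (f A) subset_rfl (hf.1 A)

/-- `f A` equals the union of all "open" subsets of `A`. -/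
lemma rep_aux {X : Type*} (f : Set X → Set X)
    (hf : (∀ A : Set X, f A ⊆ A) ∧ (∀ A B : Set X, A ⊆ B → f A ⊆ f B) ∧
      (∀ A B : Set X, f A ⊆ B → B ⊆ A → f B = f A)) (A : Set X) :
    f A = ⋃₀ {K : Set X | f K = K ∧ K ⊆ A} := by
  apply subset_antisymm
  · exact Set.subset_sUnion_of_mem ⟨idem_aux f hf A, hf.1 A⟩
  · intro x hx
    rcases hx with ⟨K, ⟨hK, hKA⟩, hxK⟩
    have : f K ⊆ f A := hf.2.1 K A hKA
    rw [hK] at this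
    exact this hxK

/-- The map `f ↦ St f = {K | f K = K}` is a bijection between complementary
choice functions and pre-topologies (families closed under arbitrary unions). -/
theorem stmt_7 {X : Type*} :
    (∀ f : Set X → Set X,
      ((∀ A : Set X, f A ⊆ A) ∧ (∀ A B : Set X, A ⊆ B → f A ⊆ f B) ∧
        (∀ A B : Set X, f A ⊆ B → B ⊆ A → f B = f A)) →
      ∀ S ⊆ {K : Set X | f K = K}, ⋃₀ S ∈ {K : Set X | f K = K}) ∧
    (∀ f g : Set X → Set X,
      ((∀ A : Set X, f A ⊆ A) ∧ (∀ A B : Set X, A ⊆ B → f A ⊆ f B) ∧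
        (∀ A B : Set X, f A ⊆ B → B ⊆ A → f B = f A)) →
      ((∀ A : Set X, g A ⊆ A) ∧ (∀ A B : Set X, A ⊆ B → g A ⊆ g B) ∧
        (∀ A B : Set X, g A ⊆ B → B ⊆ A → g B = g A)) →
      {K : Set X | f K = K} = {K : Set X | g K = K} → f = g) ∧
    (∀ P : Set (Set X), (∀ S ⊆ P, ⋃₀ S ∈ P) →
      ∃ f : Set X → Set X,
        ((∀ A : Set X, f A ⊆ A) ∧ (∀ A B : Set X, A ⊆ B → f A ⊆ f B) ∧
          (∀ A B : Set X, f A ⊆ B → B ⊆ A → f B = f A)) ∧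
        {K : Set X | f K = K} = P) := by
  refine ⟨?_, ?_, ?_⟩
  · -- St(f) is closed under unions
    rintro f ⟨h1, h2, _⟩ S hS
    apply subset_antisymm (h1 _)
    intro x hx
    rcases hx with ⟨K, hK, hxK⟩
    have hKopen : f K = K := hS hK
    have : f K ⊆ f (⋃₀ S) := h2 K _ (Set.subset_sUnion_of_mem hK)
    rw [hKopen] at this
    exact this hxK
  · -- injectivity
    intro f g hf hg hSt
    funext A
    rw [rep_aux f hf A, rep_aux g hg A]
    have : {K : Set X | f K = K ∧ K ⊆ A} = {K : Set X | g K = K ∧ K ⊆ A} :=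
      Set.ext fun K =>
        ⟨fun h => ⟨(Set.ext_iff.mp hSt K).mp h.1, h.2⟩,
         fun h => ⟨(Set.ext_iff.mp hSt K).mpr h.1, h.2⟩⟩
    rw [this]
  · -- surjectivity
    intro P hP
    refine ⟨fun A => ⋃₀ {K : Set X | K ∈ P ∧ K ⊆ A}, ⟨?_, ?_, ?_⟩, ?_⟩
    · intro A x hx
      rcases hx with ⟨K, ⟨_, hKA⟩, hxK⟩
      exact hKA hxK
    · intro A B hAB
      apply Set.sUnion_subset_sUnion
      rintro K ⟨hKP, hKA⟩
      exact ⟨hKP, hKA.trans hAB⟩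
    · intro A B hfB hBA
      apply subset_antisymm
      · apply Set.sUnion_subset_sUnion
        rintro K ⟨hKP, hKB⟩
        exact ⟨hKP, hKB.trans hBA⟩
      · apply Set.sUnion_subset_sUnion
        rintro K ⟨hKP, hKA⟩
        exact ⟨hKP, (Set.subset_sUnion_of_mem (show K ∈ {K : Set X | K ∈ P ∧ K ⊆ A} from ⟨hKP, hKA⟩)).trans hfB⟩
    · ext A
      simp only [Set.mem_setOf_eq]
      constructor
      · intro hA
        rw [← hA]
        exact hP _ (fun K hK => hK.1)
      · intro hA
        apply subset_antisymm
        · intro x hx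
          rcases hx with ⟨K, ⟨_, hKA⟩, hxK⟩
          exact hKA hxK
        · exact Set.subset_sUnion_of_mem ⟨hA, subset_rfl⟩
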